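/- Let z_1,…,z_d be complex numbers of modulus 1. Then the following are equivalent: (i) whenever c_1,…,c_d ∈ ℂ are such that lim_{n→∞} Re(c_1 z_1^n + ⋯ + c_d z_d^n) exists, one has c_1 = ⋯ = c_d = 0; (ii) for every j ∈ {1,…,d}, z_j ∉ {−1, 1} and z_j ∉ {z_k, conj(z_k)} for all k ≠ j. -/

import Mathlib

open Filter Finset

lemma cesaro_geom (r : ℂ) (hr : ‖r‖ = 1) (hne : r ≠ 1) :
    Tendsto (fun N : ℕ => ((N : ℂ))⁻¹ * ∑ n ∈ Finset.range N, r ^ n) atTop (nhds 0) := by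
  refine squeeze_zero_norm (fun N => ?_) (tendsto_const_div_atTop_nhds_zero_nat (2 / ‖r - 1‖))
  · 
    rw [geom_sum_eq hne]
    have h1 : ‖r - 1‖ ≠ 0 := by
      simp [sub_eq_zero, hne]
    rw [norm_mul, norm_div]
    simp only [norm_inv, map_inv₀, Complex.norm_natCast]
    have h2 : ‖r ^ N - 1‖ ≤ 2 := by
      calc ‖r ^ N - 1‖ ≤ ‖r ^ N‖ + ‖(1:ℂ)‖ := by
            simpa using norm_sub_le (r ^ N) 1
        _ ≤ 2 := by simp [norm_pow, hr]; norm_num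
    have h3 : 2 / ‖r - 1‖ / (N:ℝ) = (N:ℝ)⁻¹ * (2 / ‖r - 1‖) := by
      ring
    rw [h3]
    gcongr

lemma key_zero {ι : Type*} [Fintype ι] [DecidableEq ι] (w : ι → ℂ)
    (hw : ∀ i, ‖w i‖ = 1) (hinj : Function.Injective w) (h1 : ∀ i, w i ≠ 1)
    (a : ι → ℂ) (L : ℂ)
    (h : Tendsto (fun n : ℕ => ∑ i, a i * w i ^ n) atTop (nhds L)) (k : ι) : a k = 0 := by
  set s : ℕ → ℂ := fun n => ∑ i, a i * w i ^ n with hs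
  set c : ℂ := (starRingEnd ℂ) (w k) with hc
  have hcabs : ‖c‖ = 1 := by simp [hc, hw k]
  have hcne : c ≠ 1 := by
    intro hcc
    apply h1 k
    have := congrArg (starRingEnd ℂ) hcc
    simpa [hc] using this
  set T : ℕ → ℂ := fun N => (N : ℂ)⁻¹ * ∑ n ∈ Finset.range N, s n * c ^ n with hT
  have hTconv : Tendsto T atTop (nhds (a k)) := by
    have hTeq : ∀ N, T N = ∑ i, a i * ((N : ℂ)⁻¹ * ∑ n ∈ Finset.range N, (w i * c) ^ n) := by
      intro N
      simp only [hT, hs, Finset.sum_mul, Finset.mul_sum, mul_pow]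
      rw [Finset.sum_comm]
      apply Finset.sum_congr rfl
      intro i _
      apply Finset.sum_congr rfl
      intro n _
      ring
    have hval : a k = ∑ i, a i * (if i = k then 1 else 0) := by
      simp
    rw [funext hTeq, hval]
    apply tendsto_finset_sum
    intro i _
    by_cases hik : i = k
    · subst hik
      simp only [if_pos rfl, mul_one]
      have hone : w i * c = 1 := by
        rw [hc, Complex.mul_conj]
        norm_cast
        rw [Complex.normSq_eq_norm_sq, hw i]
        norm_num
      rw [hone]
      apply Tendsto.congr' (f₁ := fun _ => a i)
      · filter_upwards [eventually_ge_atTop 1] with N hN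
        have hN0 : (N : ℂ) ≠ 0 := by
          exact_mod_cast Nat.one_le_iff_ne_zero.mp hN
        simp [Finset.sum_const, hN0, mul_comm]
      · exact tendsto_const_nhds.congr (fun N => by simp)
    · simp only [if_neg hik, mul_zero]
      have hr : ‖w i * c‖ = 1 := by simp [map_mul, hcabs, hw i]
      have hrne : w i * c ≠ 1 := by
        intro hcc
        apply hik
        apply hinj
        have : w i * c * w k = w k := by rw [hcc, one_mul]
        rw [hc, mul_assoc] at this
        rw [mul_comm ((starRingEnd ℂ) (w k)) (w k), Complex.mul_conj] at this
        have h2 : (Complex.normSq (w k) : ℂ) = 1 := by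
          norm_cast
          rw [Complex.normSq_eq_norm_sq, hw k]; norm_num
        rw [h2, mul_one] at this
        exact this
      simpa using (cesaro_geom _ hr hrne).const_mul (a i)
  have hT0 : Tendsto T atTop (nhds 0) := by
    have hsplit : ∀ N, T N = (N : ℂ)⁻¹ * ∑ n ∈ Finset.range N, (s n - L) * c ^ n
        + L * ((N : ℂ)⁻¹ * ∑ n ∈ Finset.range N, c ^ n) := by
      intro N
      have : ∑ n ∈ Finset.range N, (s n - L) * c ^ n
          = (∑ n ∈ Finset.range N, s n * c ^ n) - L * ∑ n ∈ Finset.range N, c ^ n := by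
        rw [Finset.mul_sum, ← Finset.sum_sub_distrib]
        apply Finset.sum_congr rfl
        intro n _
        ring
      rw [this, hT]
      ring
    rw [funext hsplit]
    have part2 : Tendsto (fun N : ℕ => L * ((N : ℂ)⁻¹ * ∑ n ∈ Finset.range N, c ^ n)) atTop (nhds 0) := by
      simpa using (cesaro_geom c hcabs hcne).const_mul L
    have part1 : Tendsto (fun N : ℕ => (N : ℂ)⁻¹ * ∑ n ∈ Finset.range N, (s n - L) * c ^ n) atTop (nhds 0) := by
      have hnorm : Tendsto (fun n : ℕ => ‖s n - L‖) atTop (nhds 0) := by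
        have := (h.sub (tendsto_const_nhds (x := L))).norm
        simpa using this
      have hces := hnorm.cesaro
      apply squeeze_zero_norm (fun N => ?_) (by simpa using hces)
      calc ‖(N : ℂ)⁻¹ * ∑ n ∈ Finset.range N, (s n - L) * c ^ n‖
          = (N : ℝ)⁻¹ * ‖∑ n ∈ Finset.range N, (s n - L) * c ^ n‖ := by
            rw [norm_mul]; congr 1; simp
        _ ≤ (N : ℝ)⁻¹ * ∑ n ∈ Finset.range N, ‖(s n - L) * c ^ n‖ := by
            gcongr
            exact norm_sum_le _ _
        _ = (N : ℝ)⁻¹ * ∑ n ∈ Finset.range N, ‖s n - L‖ := by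
            congr 1
            apply Finset.sum_congr rfl
            intro n _
            rw [norm_mul]
            simp [norm_pow, map_pow, hcabs]
        _ = (N : ℝ)⁻¹ • ∑ n ∈ Finset.range N, ‖s n - L‖ := by rw [smul_eq_mul]
    simpa using part1.add part2
  exact tendsto_nhds_unique hTconv hT0

lemma conj_ne_self_of_unit {u : ℂ} (hu : ‖u‖ = 1) (h1 : u ≠ 1) (h2 : u ≠ -1) :
    (starRingEnd ℂ) u ≠ u := by
  intro hc
  have him : u.im = 0 := Complex.conj_eq_iff_im.mp hc
  have hsq : u.re * u.re = 1 := by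
    have h3 := Complex.sq_norm u
    rw [hu, Complex.normSq_apply, him] at h3
    nlinarith
  rcases mul_self_eq_one_iff.mp hsq with h | h
  · exact h1 (Complex.ext (by simp [h]) (by simp [him]))
  · exact h2 (Complex.ext (by simp [h]) (by simp [him]))

lemma sum_single_mul {d : ℕ} (j : Fin d) (a : ℂ) (f : Fin d → ℂ) :
    ∑ i, (Pi.single j a : Fin d → ℂ) i * f i = a * f j := by
  simp [Pi.single_apply, ite_mul, Finset.sum_ite_eq]

theorem re_limit_forces_zero_iff (d : ℕ) (z : Fin d → ℂ) (hz : ∀ j, ‖z j‖ = 1) :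
    (∀ c : Fin d → ℂ,
        (∃ l : ℝ, Filter.Tendsto (fun n : ℕ => (∑ j, c j * z j ^ n).re) Filter.atTop (nhds l)) →
        ∀ j, c j = 0)
    ↔ (∀ j, z j ≠ -1 ∧ z j ≠ 1 ∧ ∀ k, k ≠ j → z j ≠ z k ∧ z j ≠ (starRingEnd ℂ) (z k)) := by
  constructor
  · intro H j
    have hreal : ∀ r : ℝ, z j = (r : ℂ) → False := by
      intro r hr
      have hI := H (Pi.single j Complex.I) ?_ j
      · simp at hI
      · refine ⟨0, ?_⟩
        have heq : ∀ n : ℕ, (∑ i, (Pi.single j Complex.I : Fin d → ℂ) i * z i ^ n).re = 0 := by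
          intro n
          rw [sum_single_mul]
          have : (z j) ^ n = ((r ^ n : ℝ) : ℂ) := by rw [hr]; push_cast; ring
          rw [this]
          simp [Complex.mul_re, ← Complex.ofReal_pow]
        simp only [heq]
        exact tendsto_const_nhds
    refine ⟨fun h => hreal (-1) (by push_cast [h]; ring), fun h => hreal 1 (by push_cast [h]; ring), ?_⟩
    intro k hk
    constructor
    · intro hzz
      have hc := H (Pi.single j 1 - Pi.single k 1) ?_ j
      · rw [Pi.sub_apply, Pi.single_eq_same, Pi.single_eq_of_ne' hk, sub_zero] at hc
        exact one_ne_zero hc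
      · refine ⟨0, ?_⟩
        have heq : ∀ n : ℕ, (∑ i, ((Pi.single j 1 - Pi.single k 1 : Fin d → ℂ)) i * z i ^ n).re = 0 := by
          intro n
          have : ∑ i, ((Pi.single j 1 - Pi.single k 1 : Fin d → ℂ)) i * z i ^ n
              = ∑ i, (Pi.single j (1:ℂ) : Fin d → ℂ) i * z i ^ n - ∑ i, (Pi.single k (1:ℂ) : Fin d → ℂ) i * z i ^ n := by
            rw [← Finset.sum_sub_distrib]
            apply Finset.sum_congr rfl
            intro i _
            simp [sub_mul]
          rw [this, sum_single_mul, sum_single_mul, hzz]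
          simp
        simp only [heq]
        exact tendsto_const_nhds
    · intro hzz
      have hc := H (Pi.single j Complex.I + Pi.single k Complex.I) ?_ j
      · rw [Pi.add_apply, Pi.single_eq_same, Pi.single_eq_of_ne' hk, add_zero] at hc
        exact Complex.I_ne_zero hc
      · refine ⟨0, ?_⟩
        have heq : ∀ n : ℕ, (∑ i, ((Pi.single j Complex.I + Pi.single k Complex.I : Fin d → ℂ)) i * z i ^ n).re = 0 := by
          intro n
          have : ∑ i, ((Pi.single j Complex.I + Pi.single k Complex.I : Fin d → ℂ)) i * z i ^ n
              = ∑ i, (Pi.single j Complex.I : Fin d → ℂ) i * z i ^ n + ∑ i, (Pi.single k Complex.I : Fin d → ℂ) i * z i ^ n := by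
            rw [← Finset.sum_add_distrib]
            apply Finset.sum_congr rfl
            intro i _
            simp [add_mul]
          rw [this, sum_single_mul, sum_single_mul, hzz]
          have hconjpow : ((starRingEnd ℂ) (z k)) ^ n = (starRingEnd ℂ) ((z k) ^ n) := by
            rw [map_pow]
          rw [hconjpow]
          simp only [Complex.add_re, Complex.mul_re, Complex.I_re, Complex.I_im,
            Complex.conj_re, Complex.conj_im]
          ring
        simp only [heq]
        exact tendsto_const_nhds
  · rintro H c ⟨l, hl⟩ j
    set w : Fin d ⊕ Fin d → ℂ := Sum.elim z (fun j => (starRingEnd ℂ) (z j)) with hwdef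
    set a : Fin d ⊕ Fin d → ℂ := Sum.elim c (fun j => (starRingEnd ℂ) (c j)) with hadef
    have hw : ∀ i, ‖w i‖ = 1 := by
      rintro (i | i) <;> simp [hwdef, hz]
    have h1 : ∀ i, w i ≠ 1 := by
      rintro (i | i) <;> simp only [hwdef, Sum.elim_inl, Sum.elim_inr]
      · exact (H i).2.1
      · intro hcc
        apply (H i).2.1
        have := congrArg (starRingEnd ℂ) hcc
        simpa using this
    have hinj : Function.Injective w := by
      rintro (x | x) (y | y) hxy <;> simp only [hwdef, Sum.elim_inl, Sum.elim_inr] at hxy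
      · by_contra hne
        have hne' : x ≠ y := fun h => hne (by rw [h])
        exact ((H x).2.2 y (Ne.symm hne')).1 hxy
      · by_cases hxy' : x = y
        · subst hxy'
          exact absurd hxy.symm (conj_ne_self_of_unit (hz x) (H x).2.1 (H x).1)
        · exact absurd hxy ((H x).2.2 y (Ne.symm hxy')).2
      · by_cases hxy' : x = y
        · subst hxy'
          exact absurd hxy (conj_ne_self_of_unit (hz x) (H x).2.1 (H x).1)
        · exact absurd hxy.symm ((H y).2.2 x hxy').2
      · by_contra hne
        have hne' : x ≠ y := fun h => hne (by rw [h])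
        have : z x = z y := by
          have := congrArg (starRingEnd ℂ) hxy
          simpa using this
        exact ((H x).2.2 y (Ne.symm hne')).1 this
    have hsum : ∀ n : ℕ, ∑ i, a i * w i ^ n = ((2 * (∑ j, c j * z j ^ n).re : ℝ) : ℂ) := by
      intro n
      rw [Fintype.sum_sum_type]
      have : ∑ i : Fin d, a (Sum.inr i) * w (Sum.inr i) ^ n
          = (starRingEnd ℂ) (∑ j, c j * z j ^ n) := by
        rw [map_sum]
        apply Finset.sum_congr rfl
        intro i _
        simp [hadef, hwdef, map_mul, map_pow]
      rw [this]
      simp only [hadef, hwdef, Sum.elim_inl]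
      rw [Complex.add_conj]
    have htend : Tendsto (fun n : ℕ => ∑ i, a i * w i ^ n) atTop (nhds ((2 * l : ℝ) : ℂ)) := by
      rw [funext hsum]
      exact (Complex.continuous_ofReal.tendsto _).comp (hl.const_mul 2)
    have := key_zero w hw hinj h1 a _ htend (Sum.inl j)
    simpa [hadef] using this
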